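/- Let (E_k)_{k∈ℕ} be a sequence of Borel subsets of G with 0 < μ(E_k) < ∞ for all k. If β_{E_k}(x) → 0 as k → ∞ for every x ∈ G, then (E_k) is a Følner sequence, i.e. β_{E_k} → 0 uniformly on every compact subset of G. -/

import Mathlib

open MeasureTheory Filter Topology Set
open scoped Pointwise ENNReal symmDiff

/-- For a Borel set `E` with `0 < μ E < ∞`, the Følner defect function
`β_E(x) = μ(E \ Ex⁻¹) / μ(E)`. Here `Ex⁻¹ = {y | yx ∈ E} = (· * x) ⁻¹' E`. -/
noncomputable def folnerDefect {G : Type*} [Group G] [MeasurableSpace G]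
    (μ : Measure G) (E : Set G) (x : G) : ℝ :=
  (μ (E \ (· * x) ⁻¹' E)).toReal / (μ E).toReal

/-- A sequence of Borel sets of finite positive measure is a Følner sequence if
`β_{E k} → 0` uniformly on every compact subset of `G`. -/
def IsFolnerSeq {G : Type*} [Group G] [TopologicalSpace G] [MeasurableSpace G]
    (μ : Measure G) (E : ℕ → Set G) : Prop :=
  ∀ K : Set G, IsCompact K →
    TendstoUniformlyOn (fun k x => folnerDefect μ (E k) x) 0 atTop K

section Aux

variable {G : Type*} [Group G] [MeasurableSpace G]

/-- Symmetry: `μ(E \ Ex) = μ(E \ Ex⁻¹)`. -/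
lemma folner_aux_symm [MeasurableMul G] (μ : Measure G) [μ.IsMulRightInvariant]
    {E : Set G} (hE : MeasurableSet E) (hfin : μ E ≠ ∞) (x : G) :
    μ (E \ (· * x⁻¹) ⁻¹' E) = μ (E \ (· * x) ⁻¹' E) := by
  have h1 : (· * x⁻¹) ⁻¹' (((· * x) ⁻¹' E) \ E) = E \ (· * x⁻¹) ⁻¹' E := by
    ext y
    simp [Set.mem_diff, inv_mul_cancel_right]
  have h2 : μ (E \ (· * x⁻¹) ⁻¹' E) = μ (((· * x) ⁻¹' E) \ E) := by
    rw [← h1, measure_preimage_mul_right]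
  have hT : MeasurableSet ((· * x) ⁻¹' E) := (measurable_mul_const x) hE
  have h3 : μ (((· * x) ⁻¹' E) \ E) + μ (((· * x) ⁻¹' E) ∩ E) = μ E := by
    rw [measure_diff_add_inter _ hE, measure_preimage_mul_right]
  have h4 : μ (E \ (· * x) ⁻¹' E) + μ (E ∩ (· * x) ⁻¹' E) = μ E := by
    rw [measure_diff_add_inter _ hT]
  rw [Set.inter_comm] at h3
  have hc : μ (E ∩ (· * x) ⁻¹' E) ≠ ∞ :=
    ((measure_mono Set.inter_subset_left).trans_lt hfin.lt_top).ne
  rw [h2, ENNReal.eq_sub_of_add_eq hc h3, ENNReal.eq_sub_of_add_eq hc h4]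

/-- Subadditivity: `μ(E \ Ex⁻¹) ≤ μ(E \ Ev⁻¹) + μ(E \ E(vx)⁻¹)`. -/
lemma folner_aux_subadd [MeasurableMul G] (μ : Measure G) [μ.IsMulRightInvariant]
    {E : Set G} (hE : MeasurableSet E) (hfin : μ E ≠ ∞) (x v : G) :
    μ (E \ (· * x) ⁻¹' E) ≤ μ (E \ (· * v) ⁻¹' E) + μ (E \ (· * (v * x)) ⁻¹' E) := by
  have hsymm := folner_aux_symm μ hE hfin v
  have hsub : E \ (· * x) ⁻¹' E ⊆
      (E \ (· * v⁻¹) ⁻¹' E) ∪ ((· * v⁻¹) ⁻¹' E \ (· * x) ⁻¹' E) := by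
    intro y hy
    by_cases hv : y ∈ (· * v⁻¹) ⁻¹' E
    · exact Or.inr ⟨hv, hy.2⟩
    · exact Or.inl ⟨hy.1, hv⟩
  have h2 : μ ((· * v⁻¹) ⁻¹' E \ (· * x) ⁻¹' E) = μ (E \ (· * (v * x)) ⁻¹' E) := by
    have h1 : (· * v⁻¹) ⁻¹' (E \ (· * (v * x)) ⁻¹' E)
        = (· * v⁻¹) ⁻¹' E \ (· * x) ⁻¹' E := by
      ext y
      simp only [Set.mem_preimage, Set.mem_diff]
      constructor
      · rintro ⟨h1, h2⟩
        refine ⟨h1, fun hc => h2 ?_⟩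
        simpa [mul_assoc] using hc
      · rintro ⟨h1, h2⟩
        refine ⟨h1, fun hc => h2 ?_⟩
        simpa [mul_assoc] using hc
    rw [← h1, measure_preimage_mul_right]
  calc μ (E \ (· * x) ⁻¹' E)
      ≤ μ ((E \ (· * v⁻¹) ⁻¹' E) ∪ ((· * v⁻¹) ⁻¹' E \ (· * x) ⁻¹' E)) := measure_mono hsub
    _ ≤ μ (E \ (· * v⁻¹) ⁻¹' E) + μ ((· * v⁻¹) ⁻¹' E \ (· * x) ⁻¹' E) := measure_union_le _ _
    _ = μ (E \ (· * v) ⁻¹' E) + μ (E \ (· * (v * x)) ⁻¹' E) := by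
        rw [hsymm, h2]

end Aux

section Cont

variable {G : Type*} [Group G] [TopologicalSpace G]
    [IsTopologicalGroup G] [T2Space G]
    [MeasurableSpace G] [BorelSpace G]

/-- Continuity of the (unnormalized) Følner defect. -/
lemma folner_aux_cont (μ : Measure G) [μ.IsMulRightInvariant]
    [μ.InnerRegularCompactLTTop] [IsLocallyFiniteMeasure μ]
    {E : Set G} (hE : MeasurableSet E) (hfin : μ E ≠ ∞) :
    Continuous (fun v : G => μ (E \ (· * v) ⁻¹' E)) := by
  rw [continuous_iff_continuousAt]
  intro v₀
  set f : G → C(G, G) := fun v => ⟨fun y => y * v, continuous_mul_right v⟩ with hf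
  have hfc : Continuous f := by
    apply ContinuousMap.continuous_of_continuous_uncurry
    exact continuous_snd.mul continuous_fst
  have hmp : ∀ v, MeasurePreserving (f v) μ μ := fun v => measurePreserving_mul_right μ v
  have key : Tendsto (fun v => μ ((f v ⁻¹' E) ∆ (f v₀ ⁻¹' E))) (𝓝 v₀) (𝓝 0) :=
    tendsto_measure_symmDiff_preimage_nhds_zero (hfc.tendsto v₀) (.of_forall hmp) (hmp v₀)
      hE.nullMeasurableSet hfin
  have hb : μ (E \ (· * v₀) ⁻¹' E) ≠ ∞ :=
    ((measure_mono Set.diff_subset).trans_lt hfin.lt_top).ne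
  have hgen : ∀ A B : Set G, μ (E \ B) ≤ μ (E \ A) + μ (A ∆ B) := by
    intro A B
    refine (measure_mono ?_).trans (measure_union_le _ _)
    intro y hy
    by_cases hA : y ∈ A
    · exact Or.inr (Set.mem_symmDiff.mpr (Or.inl ⟨hA, hy.2⟩))
    · exact Or.inl ⟨hy.1, hA⟩
  rw [ContinuousAt, ENNReal.tendsto_nhds hb]
  intro ε hε
  filter_upwards [ENNReal.tendsto_nhds_zero.mp key ε hε] with v hv
  have hvv₀ : f v ⁻¹' E = (· * v) ⁻¹' E := rfl
  have hvv₀' : f v₀ ⁻¹' E = (· * v₀) ⁻¹' E := rfl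
  constructor
  · rw [tsub_le_iff_right]
    have := hgen ((· * v) ⁻¹' E) ((· * v₀) ⁻¹' E)
    rw [← hvv₀, ← hvv₀'] at this
    exact this.trans (add_le_add_right hv _)
  · have := hgen ((· * v₀) ⁻¹' E) ((· * v) ⁻¹' E)
    rw [symmDiff_comm, ← hvv₀, ← hvv₀'] at this
    exact this.trans (add_le_add_right hv _)

end Cont

/-- If `β_{E_k}(x) → 0` for every `x ∈ G`, then `(E_k)` is a Følner
sequence, i.e. `β_{E_k} → 0` uniformly on every compact subset of `G`. -/
theorem isFolnerSeq_of_pointwise {G : Type*} [Group G] [TopologicalSpace G]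
    [IsTopologicalGroup G] [LocallyCompactSpace G] [SigmaCompactSpace G] [T2Space G]
    [MeasurableSpace G] [BorelSpace G]
    (μ : Measure G) [μ.IsMulRightInvariant] [IsFiniteMeasureOnCompacts μ]
    [μ.IsOpenPosMeasure] [μ.Regular] (hμ : μ ≠ 0)
    (E : ℕ → Set G) (hE : ∀ k, MeasurableSet (E k))
    (hE0 : ∀ k, 0 < μ (E k)) (hEfin : ∀ k, μ (E k) < ∞)
    (h : ∀ x : G, Tendsto (fun k => folnerDefect μ (E k) x) atTop (nhds 0)) :
    IsFolnerSeq μ E := by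
  intro K hK
  -- normalized defect with values in ℝ≥0∞
  set b : ℕ → G → ℝ≥0∞ := fun k v => μ (E k \ (· * v) ⁻¹' E k) / μ (E k) with hb
  have hbmeas : ∀ k, Measurable (b k) := fun k =>
    ((folner_aux_cont μ (hE k) (hEfin k).ne).measurable).div_const _
  have hble1 : ∀ k v, b k v ≤ 1 := by
    intro k v
    rw [hb]
    calc μ (E k \ (· * v) ⁻¹' E k) / μ (E k) ≤ μ (E k) / μ (E k) :=
          ENNReal.div_le_div_right (measure_mono Set.diff_subset) _
      _ = 1 := ENNReal.div_self (hE0 k).ne' (hEfin k).ne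
  have hbne : ∀ k v, b k v ≠ ∞ := fun k v => ((hble1 k v).trans_lt ENNReal.one_lt_top).ne
  have hfol : ∀ k v, folnerDefect μ (E k) v = (b k v).toReal := by
    intro k v
    rw [hb, folnerDefect, ENNReal.toReal_div]
  have hpt : ∀ v : G, Tendsto (fun k => b k v) atTop (𝓝 0) := by
    intro v
    rw [← ENNReal.tendsto_toReal_iff (fun k => hbne k v) (ENNReal.zero_ne_top)]
    simpa [← hfol] using h v
  have hbsub : ∀ k x v, b k x ≤ b k v + b k (v * x) := by
    intro k x v
    rw [hb]
    calc μ (E k \ (· * x) ⁻¹' E k) / μ (E k)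
        ≤ (μ (E k \ (· * v) ⁻¹' E k) + μ (E k \ (· * (v * x)) ⁻¹' E k)) / μ (E k) :=
          ENNReal.div_le_div_right (folner_aux_subadd μ (hE k) (hEfin k).ne x v) _
      _ = _ := ENNReal.add_div
  -- compact neighborhood of the identity
  obtain ⟨U, hUc, hUnhds⟩ := exists_compact_mem_nhds (1 : G)
  have hUmeas : MeasurableSet U := hUc.isClosed.measurableSet
  have hU0 : 0 < μ U := μ.measure_pos_of_mem_nhds hUnhds
  have hUfin : μ U ≠ ∞ := hUc.measure_lt_top.ne
  have hCc : IsCompact (U * K) := hUc.mul hK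
  have hCfin : μ (U * K) ≠ ∞ := hCc.measure_lt_top.ne
  -- key integral inequality
  have key : ∀ k, ∀ x ∈ K,
      b k x * μ U ≤ (∫⁻ v in U, b k v ∂μ) + ∫⁻ v in U * K, b k v ∂μ := by
    intro k x hx
    have step1 : b k x * μ U ≤ (∫⁻ v in U, b k v ∂μ) + ∫⁻ v in U, b k (v * x) ∂μ := by
      calc b k x * μ U = ∫⁻ _ in U, b k x ∂μ := (setLIntegral_const U _).symm
        _ ≤ ∫⁻ v in U, (b k v + b k (v * x)) ∂μ := lintegral_mono fun v => hbsub k x v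
        _ = (∫⁻ v in U, b k v ∂μ) + ∫⁻ v in U, b k (v * x) ∂μ :=
            lintegral_add_left (hbmeas k) _
    refine step1.trans (add_le_add_right ?_ _)
    have hAmeas : MeasurableSet ((· * x⁻¹) ⁻¹' U) := (measurable_mul_const x⁻¹) hUmeas
    have hind : ∀ v, U.indicator (fun v => b k (v * x)) v
        = ((· * x⁻¹) ⁻¹' U).indicator (b k) (v * x) := by
      intro v
      by_cases hv : v ∈ U <;>
        simp [Set.indicator_apply, hv, mul_inv_cancel_right]
    calc ∫⁻ v in U, b k (v * x) ∂μ
        = ∫⁻ v, U.indicator (fun v => b k (v * x)) v ∂μ :=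
          (lintegral_indicator hUmeas _).symm
      _ = ∫⁻ v, ((· * x⁻¹) ⁻¹' U).indicator (b k) (v * x) ∂μ := by
          simp_rw [hind]
      _ = ∫⁻ w, ((· * x⁻¹) ⁻¹' U).indicator (b k) w ∂μ :=
          lintegral_mul_right_eq_self _ x
      _ = ∫⁻ w in (· * x⁻¹) ⁻¹' U, b k w ∂μ := by
          rw [lintegral_indicator hAmeas]
      _ ≤ ∫⁻ v in U * K, b k v ∂μ := by
          refine lintegral_mono_set ?_
          intro w hw
          have : (w * x⁻¹) * x = w := inv_mul_cancel_right w x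
          exact this ▸ Set.mul_mem_mul hw hx
  -- dominated convergence
  have hdc : ∀ (S : Set G), μ S ≠ ∞ →
      Tendsto (fun k => ∫⁻ v in S, b k v ∂μ) atTop (𝓝 0) := by
    intro S hS
    have := tendsto_lintegral_of_dominated_convergence (μ := μ.restrict S)
      (F := fun k v => b k v) (f := fun _ => 0) (bound := fun _ => 1)
      (fun k => hbmeas k) (fun k => Filter.Eventually.of_forall fun v => hble1 k v)
      (by simpa [lintegral_const] using hS.lt_top.ne)
      (Filter.Eventually.of_forall fun v => hpt v)
    simpa using this
  have hIU := hdc U hUfin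
  have hIC := hdc (U * K) hCfin
  have hsum : Tendsto (fun k => (∫⁻ v in U, b k v ∂μ) + ∫⁻ v in U * K, b k v ∂μ)
      atTop (𝓝 0) := by simpa using hIU.add hIC
  -- conclusion
  rw [Metric.tendstoUniformlyOn_iff]
  intro ε hε
  have hεU : (0 : ℝ≥0∞) < ENNReal.ofReal ε * μ U :=
    ENNReal.mul_pos (ENNReal.ofReal_pos.mpr hε).ne' hU0.ne'
  filter_upwards [hsum.eventually (gt_mem_nhds hεU)] with k hk x hx
  have hlt : b k x * μ U < ENNReal.ofReal ε * μ U := (key k x hx).trans_lt hk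
  have hbx : b k x < ENNReal.ofReal ε :=
    (ENNReal.mul_left_strictMono hU0.ne' hUfin).lt_iff_lt.mp hlt
  have hnonneg : 0 ≤ folnerDefect μ (E k) x := by
    rw [hfol]; exact ENNReal.toReal_nonneg
  rw [Pi.zero_apply, Real.dist_eq, zero_sub, abs_neg, abs_of_nonneg hnonneg, hfol]
  exact (ENNReal.lt_ofReal_iff_toReal_lt (hbne k x)).mp hbx
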